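/- arXiv:2011.09421 — 4 statements merged into one kernel-verified Lean document; each statement's English description precedes it below -/
import Mathlib

section
/- If a probability distribution over the parameters (w^{(1)}, w^{(2)}, b^{(1)}, b) ∈ ℝ^{3k+1} of a one-hidden-layer ReLU network with k neurons has a density with respect to Lebesgue measure, then with probability 1 the resulting function x ↦ b + Σ_i w_i^{(2)} max(0, w_i^{(1)} x + b_i^{(1)}) has exactly k+1 linear pieces. -/
set_option maxHeartbeats 1000000

open MeasureTheory

/-- `f : ℝ → ℝ` is continuous and piecewise linear with at most `n + 1` linear pieces:
there are `n` ordered breakpoints `x 0 ≤ … ≤ x (n-1)` and affine functions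
`t ↦ a i * t + c i` such that `f` agrees with the `i`-th affine function on the `i`-th
piece (the points lying at or above all breakpoints of index `< i` and strictly below
all breakpoints of index `≥ i`). -/
def ContPiecewiseLinear (n : ℕ) (f : ℝ → ℝ) : Prop :=
  Continuous f ∧ ∃ (x : Fin n → ℝ) (a c : Fin (n + 1) → ℝ), Monotone x ∧
    ∀ (t : ℝ) (i : Fin (n + 1)),
      ((∀ j : Fin n, (j : ℕ) < (i : ℕ) → x j ≤ t) ∧
        (∀ j : Fin n, (i : ℕ) ≤ (j : ℕ) → t < x j)) →
      f t = a i * t + c i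

/-- `f` is continuous and piecewise linear with exactly `n + 1` linear pieces. -/
def ContPiecewiseLinearExact (n : ℕ) (f : ℝ → ℝ) : Prop :=
  ContPiecewiseLinear n f ∧ ∀ m < n, ¬ ContPiecewiseLinear m f

/-- A one-hidden-layer ReLU network `ℝ → ℝ` with `k` neurons:
`x ↦ b + ∑ i, w2 i * max 0 (w1 i * x + b1 i)`. -/
noncomputable def reluNet {k : ℕ} (w1 w2 b1 : Fin k → ℝ) (b : ℝ) (x : ℝ) : ℝ :=
  b + ∑ i, w2 i * max 0 (w1 i * x + b1 i)

/-! ### Auxiliary lemmas: the deterministic part -/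

lemma reluNet_contPL {k : ℕ} (w1 w2 b1 : Fin k → ℝ) (b : ℝ)
    (hw1 : ∀ i, w1 i ≠ 0) :
    ContPiecewiseLinear k (reluNet w1 w2 b1 b) := by
  classical
  constructor
  · unfold reluNet
    exact continuous_const.add (continuous_finset_sum _ fun i _ =>
      continuous_const.mul (continuous_const.max
        ((continuous_const.mul continuous_id).add continuous_const)))
  set ξ : Fin k → ℝ := fun i => -b1 i / w1 i with hξdef
  have hval : ∀ s t, w1 s * t + b1 s = w1 s * (t - ξ s) := by
    intro s t
    have h := hw1 s
    simp only [hξdef]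
    field_simp
    ring
  set σ := Tuple.sort ξ with hσ
  set A : Fin (k+1) → Finset (Fin k) := fun i =>
    Finset.univ.filter (fun m =>
      if 0 < w1 m then ((σ.symm m : Fin k) : ℕ) < (i : ℕ)
      else (i : ℕ) ≤ ((σ.symm m : Fin k) : ℕ)) with hA
  refine ⟨ξ ∘ σ, fun i => ∑ m ∈ A i, w2 m * w1 m, fun i => b + ∑ m ∈ A i, w2 m * b1 m,
    Tuple.monotone_sort ξ, ?_⟩
  rintro t i ⟨H1, H2⟩
  have key : ∀ m : Fin k, w2 m * max 0 (w1 m * t + b1 m)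
      = if (if 0 < w1 m then ((σ.symm m : Fin k) : ℕ) < (i : ℕ)
            else (i : ℕ) ≤ ((σ.symm m : Fin k) : ℕ))
        then w2 m * (w1 m * t + b1 m) else 0 := by
    intro m
    have hxm : (ξ ∘ σ) (σ.symm m) = ξ m := by simp
    rcases (hw1 m).lt_or_gt with hneg | hpos
    · simp only [hneg.not_gt, if_false]
      by_cases hj : (i : ℕ) ≤ ((σ.symm m : Fin k) : ℕ)
      · rw [if_pos hj]
        have ht : t < ξ m := by have := H2 (σ.symm m) hj; rwa [hxm] at this
        have hpos' : 0 ≤ w1 m * t + b1 m := by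
          rw [hval m t]; nlinarith
        rw [max_eq_right hpos']
      · rw [if_neg hj]
        push_neg at hj
        have ht : ξ m ≤ t := by have := H1 (σ.symm m) hj; rwa [hxm] at this
        have hneg' : w1 m * t + b1 m ≤ 0 := by
          rw [hval m t]; nlinarith
        rw [max_eq_left hneg', mul_zero]
    · simp only [hpos, if_true]
      by_cases hj : ((σ.symm m : Fin k) : ℕ) < (i : ℕ)
      · rw [if_pos hj]
        have ht : ξ m ≤ t := by have := H1 (σ.symm m) hj; rwa [hxm] at this
        have hpos' : 0 ≤ w1 m * t + b1 m := by
          rw [hval m t]; nlinarith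
        rw [max_eq_right hpos']
      · rw [if_neg hj]
        push_neg at hj
        have ht : t < ξ m := by have := H2 (σ.symm m) hj; rwa [hxm] at this
        have hneg' : w1 m * t + b1 m ≤ 0 := by
          rw [hval m t]; nlinarith
        rw [max_eq_left hneg', mul_zero]
  have step1 : reluNet w1 w2 b1 b t = b + ∑ m ∈ A i, w2 m * (w1 m * t + b1 m) := by
    unfold reluNet
    rw [hA]
    rw [Finset.sum_filter]
    congr 1
    exact Finset.sum_congr rfl fun m _ => key m
  rw [step1]
  have : ∑ m ∈ A i, w2 m * (w1 m * t + b1 m)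
      = (∑ m ∈ A i, w2 m * w1 m) * t + ∑ m ∈ A i, w2 m * b1 m := by
    rw [Finset.sum_mul, ← Finset.sum_add_distrib]
    exact Finset.sum_congr rfl fun m _ => by ring
  rw [this]; ring

lemma max_threept {a b c : ℝ} (h : a + b = 2 * c)
    (hsign : (0 ≤ a ∧ 0 ≤ b ∧ 0 ≤ c) ∨ (a ≤ 0 ∧ b ≤ 0 ∧ c ≤ 0)) :
    max 0 a + max 0 b - 2 * max 0 c = 0 := by
  rcases hsign with ⟨h1, h2, h3⟩ | ⟨h1, h2, h3⟩
  · rw [max_eq_right h1, max_eq_right h2, max_eq_right h3]; linarith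
  · rw [max_eq_left h1, max_eq_left h2, max_eq_left h3]; ring

lemma reluNet_not_contPL {k : ℕ} (w1 w2 b1 : Fin k → ℝ) (b : ℝ)
    (hw1 : ∀ i, w1 i ≠ 0) (hw2 : ∀ i, w2 i ≠ 0)
    (hinj : Function.Injective (fun i => -b1 i / w1 i)) :
    ∀ m, m < k → ¬ ContPiecewiseLinear m (reluNet w1 w2 b1 b) := by
  classical
  intro m hm hPL
  obtain ⟨-, y, a, c, hy, H⟩ := hPL
  set ξ : Fin k → ℝ := fun i => -b1 i / w1 i with hξdef
  have hval : ∀ s t, w1 s * t + b1 s = w1 s * (t - ξ s) := by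
    intro s t
    have h := hw1 s
    simp only [hξdef]
    field_simp
    ring
  -- pigeonhole: some kink ξ r is not a breakpoint of the representation
  obtain ⟨r, hr⟩ : ∃ r : Fin k, ∀ j : Fin m, y j ≠ ξ r := by
    by_contra hcon
    push_neg at hcon
    have hsub : Finset.univ.image ξ ⊆ Finset.univ.image y := by
      intro z hz
      simp only [Finset.mem_image, Finset.mem_univ, true_and] at hz ⊢
      obtain ⟨r, rfl⟩ := hz
      obtain ⟨j, hj⟩ := hcon r
      exact ⟨j, hj⟩
    have h1 : (Finset.univ.image ξ).card = k := by
      rw [Finset.card_image_of_injective _ hinj, Finset.card_univ, Fintype.card_fin]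
    have h2 : (Finset.univ.image y).card ≤ m := by
      calc (Finset.univ.image y).card ≤ Finset.univ.card := Finset.card_image_le
      _ = m := by simp
    have := Finset.card_le_card hsub
    omega
  -- a positive distance ε from ξ r to all other special points
  set S : Finset ℝ :=
    (Finset.univ.image y ∪ Finset.univ.image ξ).filter (fun z => z ≠ ξ r) with hSdef
  obtain ⟨ε, hε0, hεS⟩ : ∃ ε > 0, ∀ z ∈ S, ε ≤ |z - ξ r| := by
    rcases S.eq_empty_or_nonempty with hS | hS
    · exact ⟨1, one_pos, by simp [hS]⟩
    · set T := S.image fun z => |z - ξ r| with hT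
      have hTne : T.Nonempty := hS.image _
      refine ⟨T.min' hTne, ?_, fun z hz => T.min'_le _ (Finset.mem_image_of_mem _ hz)⟩
      obtain ⟨z, hz, hzeq⟩ := Finset.mem_image.mp (T.min'_mem hTne)
      rw [← hzeq]
      exact abs_pos.mpr (sub_ne_zero.mpr (Finset.mem_filter.mp hz).2)
  have hyS : ∀ j : Fin m, y j ∈ S := fun j =>
    Finset.mem_filter.mpr ⟨Finset.mem_union_left _
      (Finset.mem_image_of_mem _ (Finset.mem_univ _)), hr j⟩
  have hξS : ∀ s : Fin k, s ≠ r → ξ s ∈ S := fun s hs =>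
    Finset.mem_filter.mpr ⟨Finset.mem_union_right _
      (Finset.mem_image_of_mem _ (Finset.mem_univ _)),
      fun h => hs (hinj h)⟩
  -- the piece containing ξ r
  set F : Finset (Fin m) := Finset.univ.filter (fun j => y j < ξ r) with hF
  have hFcard : F.card ≤ m := le_trans (Finset.card_filter_le _ _) (by simp)
  set I : Fin (m + 1) := ⟨F.card, Nat.lt_succ_of_le hFcard⟩ with hI
  have hlt : ∀ j : Fin m, (j : ℕ) < F.card → y j < ξ r := by
    intro j hj
    by_contra hcon
    have hgt : ξ r < y j := lt_of_le_of_ne (not_lt.mp hcon) (Ne.symm (hr j))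
    have hsubF : F ⊆ Finset.Iio j := by
      intro z hz
      exact Finset.mem_Iio.mpr (hy.reflect_lt (lt_trans (Finset.mem_filter.mp hz).2 hgt))
    have := Finset.card_le_card hsubF
    rw [Fin.card_Iio] at this
    omega
  have hge : ∀ j : Fin m, F.card ≤ (j : ℕ) → ξ r < y j := by
    intro j hj
    by_contra hcon
    have hlt' : y j < ξ r := lt_of_le_of_ne (not_lt.mp hcon) (hr j)
    have hsubF : Finset.Iic j ⊆ F := by
      intro z hz
      exact Finset.mem_filter.mpr ⟨Finset.mem_univ _,
        lt_of_le_of_lt (hy (Finset.mem_Iic.mp hz)) hlt'⟩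
    have := Finset.card_le_card hsubF
    rw [Fin.card_Iic] at this
    omega
  -- f is affine on the ε-ball around ξ r
  have hpiece : ∀ t : ℝ, |t - ξ r| < ε → reluNet w1 w2 b1 b t = a I * t + c I := by
    intro t ht
    rw [abs_sub_lt_iff] at ht
    apply H t I
    constructor
    · intro j hj
      have h1 : y j < ξ r := hlt j hj
      have h2 : ε ≤ |y j - ξ r| := hεS _ (hyS j)
      rw [abs_of_neg (sub_neg.mpr h1)] at h2
      linarith
    · intro j hj
      have h1 : ξ r < y j := hge j hj
      have h2 : ε ≤ |y j - ξ r| := hεS _ (hyS j)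
      rw [abs_of_pos (sub_pos.mpr h1)] at h2
      linarith
  -- second difference of f at ξ r with step ε/2
  have hδ : 0 < ε / 2 := half_pos hε0
  have hb1' : |(ξ r + ε / 2) - ξ r| < ε := by
    rw [add_sub_cancel_left, abs_of_pos hδ]; linarith
  have hb2' : |(ξ r - ε / 2) - ξ r| < ε := by
    rw [sub_sub_cancel_left, abs_neg, abs_of_pos hδ]; linarith
  have hb3' : |ξ r - ξ r| < ε := by simp [hε0]
  have haff : reluNet w1 w2 b1 b (ξ r + ε / 2) + reluNet w1 w2 b1 b (ξ r - ε / 2)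
      - 2 * reluNet w1 w2 b1 b (ξ r) = 0 := by
    rw [hpiece _ hb1', hpiece _ hb2', hpiece _ hb3']; ring
  have hsum : reluNet w1 w2 b1 b (ξ r + ε / 2) + reluNet w1 w2 b1 b (ξ r - ε / 2)
      - 2 * reluNet w1 w2 b1 b (ξ r)
      = ∑ s : Fin k, (w2 s * max 0 (w1 s * (ξ r + ε / 2) + b1 s)
          + w2 s * max 0 (w1 s * (ξ r - ε / 2) + b1 s)
          - 2 * (w2 s * max 0 (w1 s * (ξ r) + b1 s))) := by
    unfold reluNet
    rw [Finset.sum_sub_distrib, Finset.sum_add_distrib, ← Finset.mul_sum]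
    ring
  have hterm : ∀ s : Fin k, s ≠ r →
      w2 s * max 0 (w1 s * (ξ r + ε / 2) + b1 s)
        + w2 s * max 0 (w1 s * (ξ r - ε / 2) + b1 s)
        - 2 * (w2 s * max 0 (w1 s * (ξ r) + b1 s)) = 0 := by
    intro s hs
    have hd : ε ≤ |ξ s - ξ r| := hεS _ (hξS s hs)
    rw [hval s, hval s, hval s]
    have hkey : max 0 (w1 s * (ξ r + ε / 2 - ξ s)) + max 0 (w1 s * (ξ r - ε / 2 - ξ s))
        - 2 * max 0 (w1 s * (ξ r - ξ s)) = 0 := by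
      apply max_threept (by ring)
      rcases le_abs.mp hd with hcase | hcase
      · -- ξ s ≥ ξ r + ε : all three points are < ξ s
        rcases (hw1 s).lt_or_gt with hneg | hpos
        · left; refine ⟨?_, ?_, ?_⟩ <;> nlinarith
        · right; refine ⟨?_, ?_, ?_⟩ <;> nlinarith
      · -- ξ s ≤ ξ r - ε : all three points are > ξ s
        rcases (hw1 s).lt_or_gt with hneg | hpos
        · right; refine ⟨?_, ?_, ?_⟩ <;> nlinarith
        · left; refine ⟨?_, ?_, ?_⟩ <;> nlinarith
    linear_combination w2 s * hkey
  have hsingle : ∑ s : Fin k, (w2 s * max 0 (w1 s * (ξ r + ε / 2) + b1 s)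
          + w2 s * max 0 (w1 s * (ξ r - ε / 2) + b1 s)
          - 2 * (w2 s * max 0 (w1 s * (ξ r) + b1 s)))
      = w2 r * max 0 (w1 r * (ξ r + ε / 2) + b1 r)
          + w2 r * max 0 (w1 r * (ξ r - ε / 2) + b1 r)
          - 2 * (w2 r * max 0 (w1 r * (ξ r) + b1 r)) :=
    Finset.sum_eq_single r (fun s _ hs => hterm s hs) (by simp)
  have e1 : w1 r * (ξ r + ε / 2) + b1 r = w1 r * (ε / 2) := by rw [hval]; ring
  have e2 : w1 r * (ξ r - ε / 2) + b1 r = -(w1 r * (ε / 2)) := by rw [hval]; ring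
  have e3 : w1 r * (ξ r) + b1 r = 0 := by rw [hval]; ring
  rw [hsum, hsingle, e1, e2, e3] at haff
  rcases (hw1 r).lt_or_gt with hneg | hpos
  · rw [max_eq_right (by nlinarith : (0:ℝ) ≤ -(w1 r * (ε / 2))),
      max_eq_left (by nlinarith : w1 r * (ε / 2) ≤ 0), max_self, mul_zero] at haff
    have : w2 r * (w1 r * (ε / 2)) ≠ 0 := mul_ne_zero (hw2 r) (by nlinarith)
    apply this
    linarith
  · rw [max_eq_right (by nlinarith : (0:ℝ) ≤ w1 r * (ε / 2)),
      max_eq_left (by nlinarith : -(w1 r * (ε / 2)) ≤ 0), max_self, mul_zero] at haff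
    have : w2 r * (w1 r * (ε / 2)) ≠ 0 := mul_ne_zero (hw2 r) (by nlinarith)
    apply this
    linarith

/-! ### Auxiliary lemmas: the measure-zero part -/

lemma haarB (k : ℕ) :
    (volume : Measure ((Fin k → ℝ) × (Fin k → ℝ) × ℝ)).IsAddHaarMeasure := by
  rw [Measure.volume_eq_prod]
  have h1 : (volume : Measure ((Fin k → ℝ) × ℝ)).IsAddHaarMeasure := by
    rw [Measure.volume_eq_prod]; infer_instance
  exact Measure.prod.instIsAddHaarMeasure _ _

lemma haarP (k : ℕ) :
    (volume : Measure ((Fin k → ℝ) × (Fin k → ℝ) × (Fin k → ℝ) × ℝ)).IsAddHaarMeasure := by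
  rw [Measure.volume_eq_prod]
  have h1 := haarB k
  exact Measure.prod.instIsAddHaarMeasure _ _

lemma vol_w1_zero (k : ℕ) (i : Fin k) :
    volume {p : (Fin k → ℝ) × (Fin k → ℝ) × (Fin k → ℝ) × ℝ | p.1 i = 0} = 0 := by
  haveI := haarP k
  set L : ((Fin k → ℝ) × (Fin k → ℝ) × (Fin k → ℝ) × ℝ) →ₗ[ℝ] ℝ :=
    (LinearMap.proj i).comp (LinearMap.fst ℝ (Fin k → ℝ) ((Fin k → ℝ) × (Fin k → ℝ) × ℝ)) with hL
  have hset : {p : (Fin k → ℝ) × (Fin k → ℝ) × (Fin k → ℝ) × ℝ | p.1 i = 0}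
      = (LinearMap.ker L : Set _) := by
    ext p; simp [hL, LinearMap.mem_ker]
  rw [hset]
  apply Measure.addHaar_submodule
  intro htop
  have h0 := LinearMap.ker_eq_top.mp htop
  have h1 : L ((fun _ => 1, 0, 0, 0) : (Fin k → ℝ) × (Fin k → ℝ) × (Fin k → ℝ) × ℝ) = 1 := by
    simp [hL]
  rw [h0] at h1
  simp at h1

lemma vol_w2_zero (k : ℕ) (i : Fin k) :
    volume {p : (Fin k → ℝ) × (Fin k → ℝ) × (Fin k → ℝ) × ℝ | p.2.1 i = 0} = 0 := by
  haveI := haarP k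
  set L : ((Fin k → ℝ) × (Fin k → ℝ) × (Fin k → ℝ) × ℝ) →ₗ[ℝ] ℝ :=
    (LinearMap.proj i).comp ((LinearMap.fst ℝ (Fin k → ℝ) ((Fin k → ℝ) × ℝ)).comp
      (LinearMap.snd ℝ (Fin k → ℝ) ((Fin k → ℝ) × (Fin k → ℝ) × ℝ))) with hL
  have hset : {p : (Fin k → ℝ) × (Fin k → ℝ) × (Fin k → ℝ) × ℝ | p.2.1 i = 0}
      = (LinearMap.ker L : Set _) := by
    ext p; simp [hL, LinearMap.mem_ker]
  rw [hset]
  apply Measure.addHaar_submodule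
  intro htop
  have h0 := LinearMap.ker_eq_top.mp htop
  have h1 : L ((0, fun _ => 1, 0, 0) : (Fin k → ℝ) × (Fin k → ℝ) × (Fin k → ℝ) × ℝ) = 1 := by
    simp [hL]
  rw [h0] at h1
  simp at h1

lemma vol_cross_zero (k : ℕ) (i j : Fin k) (hij : i ≠ j) :
    volume {p : (Fin k → ℝ) × (Fin k → ℝ) × (Fin k → ℝ) × ℝ |
      p.1 i ≠ 0 ∧ p.2.2.1 i * p.1 j = p.2.2.1 j * p.1 i} = 0 := by
  classical
  haveI := haarB k
  rw [Measure.volume_eq_prod]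
  set s : Set ((Fin k → ℝ) × ((Fin k → ℝ) × (Fin k → ℝ) × ℝ)) :=
    {p | p.1 i ≠ 0 ∧ p.2.2.1 i * p.1 j = p.2.2.1 j * p.1 i} with hs
  have hms : MeasurableSet s := by
    have m1 : Measurable fun p : (Fin k → ℝ) × ((Fin k → ℝ) × (Fin k → ℝ) × ℝ) => p.1 i :=
      (measurable_pi_apply i).comp measurable_fst
    have m2 : Measurable fun p : (Fin k → ℝ) × ((Fin k → ℝ) × (Fin k → ℝ) × ℝ) =>
        p.2.2.1 i * p.1 j - p.2.2.1 j * p.1 i := by fun_prop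
    have heq : s = ((fun p : (Fin k → ℝ) × ((Fin k → ℝ) × (Fin k → ℝ) × ℝ) => p.1 i) ⁻¹' {0})ᶜ
        ∩ ((fun p : (Fin k → ℝ) × ((Fin k → ℝ) × (Fin k → ℝ) × ℝ) =>
        p.2.2.1 i * p.1 j - p.2.2.1 j * p.1 i) ⁻¹' {0}) := by
      ext p
      simp [hs, sub_eq_zero]
    rw [heq]
    exact ((m1 (measurableSet_singleton 0)).compl).inter (m2 (measurableSet_singleton 0))
  rw [Measure.measure_prod_null hms]
  apply Filter.Eventually.of_forall
  intro w1
  show volume (Prod.mk w1 ⁻¹' s) = 0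
  by_cases hw : w1 i = 0
  · have : Prod.mk w1 ⁻¹' s = ∅ := by
      ext q; simp [hs, hw]
    simp [this]
  · set L : ((Fin k → ℝ) × (Fin k → ℝ) × ℝ) →ₗ[ℝ] ℝ :=
      w1 j • ((LinearMap.proj i).comp ((LinearMap.fst ℝ (Fin k → ℝ) ℝ).comp
        (LinearMap.snd ℝ (Fin k → ℝ) ((Fin k → ℝ) × ℝ))))
      - w1 i • ((LinearMap.proj j).comp ((LinearMap.fst ℝ (Fin k → ℝ) ℝ).comp
        (LinearMap.snd ℝ (Fin k → ℝ) ((Fin k → ℝ) × ℝ)))) with hLdef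
    have hset : Prod.mk w1 ⁻¹' s = (LinearMap.ker L : Set _) := by
      ext q
      simp only [hs, Set.mem_preimage, Set.mem_setOf_eq, SetLike.mem_coe, LinearMap.mem_ker,
        hLdef, LinearMap.sub_apply, LinearMap.smul_apply, LinearMap.comp_apply,
        LinearMap.snd_apply, LinearMap.fst_apply, LinearMap.proj_apply, smul_eq_mul]
      rw [sub_eq_zero, mul_comm (w1 j) _, mul_comm (w1 i) _]
      exact and_iff_right hw
    rw [hset]
    apply Measure.addHaar_submodule
    intro htop
    have h0 := LinearMap.ker_eq_top.mp htop
    have h1 : L ((0, Pi.single j 1, 0) : (Fin k → ℝ) × (Fin k → ℝ) × ℝ) = -w1 i := by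
      simp [hLdef, Pi.single_eq_same, Pi.single_eq_of_ne hij]
    rw [h0] at h1
    simp at h1
    exact hw (by linarith)

/-- If the parameters of a one-hidden-layer ReLU network with `k` neurons are drawn
from a distribution with a density with respect to Lebesgue measure, then with
probability 1 the network has exactly `k + 1` linear pieces. -/
theorem reluNet_exact_pieces_ae (k : ℕ)
    (μ : Measure ((Fin k → ℝ) × (Fin k → ℝ) × (Fin k → ℝ) × ℝ))
    [IsProbabilityMeasure μ] (hμ : μ ≪ volume) :
    μ {p | ContPiecewiseLinearExact k (reluNet p.1 p.2.1 p.2.2.1 p.2.2.2)} = 1 := by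
  classical
  set G : Set ((Fin k → ℝ) × (Fin k → ℝ) × (Fin k → ℝ) × ℝ) :=
    {p | ContPiecewiseLinearExact k (reluNet p.1 p.2.1 p.2.2.1 p.2.2.2)} with hG
  set Bad : Set ((Fin k → ℝ) × (Fin k → ℝ) × (Fin k → ℝ) × ℝ) :=
    (⋃ i, {p : (Fin k → ℝ) × (Fin k → ℝ) × (Fin k → ℝ) × ℝ | p.1 i = 0})
    ∪ (⋃ i, {p : (Fin k → ℝ) × (Fin k → ℝ) × (Fin k → ℝ) × ℝ | p.2.1 i = 0})
    ∪ (⋃ i, ⋃ j, {p : (Fin k → ℝ) × (Fin k → ℝ) × (Fin k → ℝ) × ℝ |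
        i ≠ j ∧ p.1 i ≠ 0 ∧ p.2.2.1 i * p.1 j = p.2.2.1 j * p.1 i}) with hBad
  have hBadvol : volume Bad = 0 := by
    rw [hBad]
    refine measure_union_null (measure_union_null ?_ ?_) ?_
    · exact measure_iUnion_null fun i => vol_w1_zero k i
    · exact measure_iUnion_null fun i => vol_w2_zero k i
    · refine measure_iUnion_null fun i => measure_iUnion_null fun j => ?_
      by_cases hij : i = j
      · have : {p : (Fin k → ℝ) × (Fin k → ℝ) × (Fin k → ℝ) × ℝ |
            i ≠ j ∧ p.1 i ≠ 0 ∧ p.2.2.1 i * p.1 j = p.2.2.1 j * p.1 i} = ∅ := by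
          ext p; simp [hij]
        simp [this]
      · refine measure_mono_null ?_ (vol_cross_zero k i j hij)
        intro p hp
        exact ⟨hp.2.1, hp.2.2⟩
  have hsub : Gᶜ ⊆ Bad := by
    intro p hp
    by_contra hpB
    apply hp
    have h1 : ∀ i, p.1 i ≠ 0 := fun i hi =>
      hpB (Set.mem_union_left _ (Set.mem_union_left _ (Set.mem_iUnion.mpr ⟨i, hi⟩)))
    have h2 : ∀ i, p.2.1 i ≠ 0 := fun i hi =>
      hpB (Set.mem_union_left _ (Set.mem_union_right _ (Set.mem_iUnion.mpr ⟨i, hi⟩)))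
    have h3 : Function.Injective (fun i => -p.2.2.1 i / p.1 i) := by
      intro i j hijv
      by_contra hne
      apply hpB
      refine Set.mem_union_right _ (Set.mem_iUnion.mpr ⟨i, Set.mem_iUnion.mpr ⟨j, ?_⟩⟩)
      refine ⟨hne, h1 i, ?_⟩
      have hijv' : -p.2.2.1 i / p.1 i = -p.2.2.1 j / p.1 j := hijv
      have hcross := (div_eq_div_iff (h1 i) (h1 j)).mp hijv'
      linear_combination -hcross
    exact ⟨reluNet_contPL _ _ _ _ h1,
      fun m hm => reluNet_not_contPL _ _ _ _ h1 h2 h3 m hm⟩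
  have hμBad : μ Bad = 0 := hμ hBadvol
  have hc : μ Gᶜ = 0 := measure_mono_null hsub hμBad
  have hle := measure_union_le (μ := μ) G Gᶜ
  rw [Set.union_compl_self, measure_univ, hc, add_zero] at hle
  exact le_antisymm prob_le_one hle
end

section
/- The set Ẽ_k = {f ∈ ℝ^ℚ : f extends to a continuous function ℝ → ℝ with at most k linear pieces} is measurable in the product σ-algebra on ℝ^ℚ. -/
open MeasureTheory

noncomputable def Phi (n : ℕ) (p : ℝ × ℝ × (Fin n → ℝ) × (Fin n → ℝ)) : ℝ → ℝ :=
  fun t => p.1 + p.2.1 * t + ∑ j, p.2.2.1 j * max 0 (t - p.2.2.2 j)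

lemma piece_cover {n : ℕ} {x : Fin n → ℝ} (hx : Monotone x) (t : ℝ) :
    ∃ i : Fin (n+1),
      (∀ j : Fin n, (j : ℕ) < (i : ℕ) → x j ≤ t) ∧
        (∀ j : Fin n, (i : ℕ) ≤ (j : ℕ) → t < x j) := by
  classical
  set S := Finset.univ.filter (fun j : Fin n => x j ≤ t) with hS
  have hcard : S.card ≤ n := le_trans (Finset.card_filter_le _ _) (by simp)
  refine ⟨⟨S.card, Nat.lt_succ_of_le hcard⟩, ?_, ?_⟩
  · intro j hj
    by_contra hxj
    push_neg at hxj
    have hsub : S ⊆ Finset.Iio j := by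
      intro j' hj'
      simp only [hS, Finset.mem_filter, Finset.mem_univ, true_and] at hj'
      rw [Finset.mem_Iio]
      by_contra hle
      push_neg at hle
      exact absurd (hx hle) (by linarith)
    have h2 := Finset.card_le_card hsub
    rw [Fin.card_Iio] at h2
    simp only at hj
    omega
  · intro j hj
    by_contra hxj
    push_neg at hxj
    have hsub : Finset.Iic j ⊆ S := by
      intro j' hj'
      simp only [hS, Finset.mem_filter, Finset.mem_univ, true_and]
      exact le_trans (hx (Finset.mem_Iic.mp hj')) hxj
    have h2 := Finset.card_le_card hsub
    rw [Fin.card_Iic] at h2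
    simp only at hj
    omega

lemma sum_max_piece {n : ℕ} {x : Fin n → ℝ} {t : ℝ} {i : Fin (n+1)} (g : Fin n → ℝ)
    (h1 : ∀ j : Fin n, (j : ℕ) < (i : ℕ) → x j ≤ t)
    (h2 : ∀ j : Fin n, (i : ℕ) ≤ (j : ℕ) → t < x j) :
    ∑ j, g j * max 0 (t - x j)
      = ∑ j ∈ Finset.univ.filter (fun j : Fin n => (j : ℕ) < (i : ℕ)), g j * (t - x j) := by
  classical
  rw [← Finset.sum_filter_add_sum_filter_not Finset.univ (fun j : Fin n => (j : ℕ) < (i : ℕ))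
    (fun j => g j * max 0 (t - x j))]
  have e1 : ∀ j ∈ Finset.univ.filter (fun j : Fin n => (j : ℕ) < (i : ℕ)),
      g j * max 0 (t - x j) = g j * (t - x j) := by
    intro j hj
    simp only [Finset.mem_filter] at hj
    rw [max_eq_right (by linarith [h1 j hj.2])]
  have e2 : ∀ j ∈ Finset.univ.filter (fun j : Fin n => ¬ (j : ℕ) < (i : ℕ)),
      g j * max 0 (t - x j) = 0 := by
    intro j hj
    simp only [Finset.mem_filter] at hj
    rw [max_eq_left (by linarith [h2 j (Nat.le_of_not_lt hj.2)])]
    ring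
  rw [Finset.sum_congr rfl e1, Finset.sum_congr rfl e2, Finset.sum_const_zero, add_zero]

lemma phi_continuous (n : ℕ) (p : ℝ × ℝ × (Fin n → ℝ) × (Fin n → ℝ)) :
    Continuous (Phi n p) := by
  unfold Phi
  fun_prop

lemma phi_cpl (n : ℕ) (p : ℝ × ℝ × (Fin n → ℝ) × (Fin n → ℝ))
    (hx : Monotone p.2.2.2) : ContPiecewiseLinear n (Phi n p) := by
  classical
  obtain ⟨c, a, g, x⟩ := p
  refine ⟨phi_continuous _ _, x,
    fun i => a + ∑ j ∈ Finset.univ.filter (fun j : Fin n => (j : ℕ) < (i : ℕ)), g j,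
    fun i => c - ∑ j ∈ Finset.univ.filter (fun j : Fin n => (j : ℕ) < (i : ℕ)), g j * x j,
    hx, ?_⟩
  rintro t i ⟨h1, h2⟩
  show c + a * t + _ = _
  rw [sum_max_piece g h1 h2]
  rw [Finset.sum_congr rfl (fun j _ => mul_sub (g j) t (x j)), Finset.sum_sub_distrib,
    ← Finset.sum_mul]
  ring

lemma cpl_phi {n : ℕ} {f : ℝ → ℝ} (hf : ContPiecewiseLinear n f) :
    ∃ p : ℝ × ℝ × (Fin n → ℝ) × (Fin n → ℝ), Monotone p.2.2.2 ∧ ∀ t, f t = Phi n p t := by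
  classical
  obtain ⟨hc, x, a, c, hx, h⟩ := hf
  set P : Fin (n+1) → Prop := fun i => ∃ t : ℝ,
      (∀ j : Fin n, (j : ℕ) < (i : ℕ) → x j ≤ t) ∧
        (∀ j : Fin n, (i : ℕ) ≤ (j : ℕ) → t < x j) with hP
  set N : Fin (n+1) → Fin (n+1) :=
    Fin.induction (motive := fun _ => Fin (n+1)) 0
      (fun i ih => if P i.succ then i.succ else ih) with hNdef
  have hN0 : N 0 = 0 := by simp [hNdef]
  have hNs : ∀ i : Fin n, N i.succ = if P i.succ then i.succ else N i.castSucc := by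
    intro i; simp [hNdef]
  -- piece 0 is nonempty
  have hP0 : P 0 := by
    rcases Nat.eq_zero_or_pos n with hn | hn
    · subst hn
      exact ⟨0, fun j hj => absurd j.2 (by omega), fun j hj => absurd j.2 (by omega)⟩
    · refine ⟨x ⟨0, hn⟩ - 1, fun j hj => absurd hj (by simp), fun j _ => ?_⟩
      have := hx (show (⟨0, hn⟩ : Fin n) ≤ j from Fin.mk_le_of_le_val (Nat.zero_le _))
      linarith
  have hNP : ∀ i, P (N i) := by
    intro i
    induction i using Fin.induction with
    | zero => rw [hN0]; exact hP0
    | succ i ih =>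
      rw [hNs]
      split
      · assumption
      · exact ih
  have hNle : ∀ i : Fin (n+1), (N i : ℕ) ≤ (i : ℕ) := by
    intro i
    induction i using Fin.induction with
    | zero => simp [hN0]
    | succ i ih =>
      rw [hNs]
      have hcc : ((i.castSucc : Fin (n+1)) : ℕ) = (i : ℕ) := by simp
      split
      · omega
      · rw [hcc] at ih; simp only [Fin.val_succ]; omega
  have hNeq : ∀ i, P i → N i = i := by
    intro i hi
    induction i using Fin.induction with
    | zero => exact hN0
    | succ i ih => rw [hNs]; simp [hi]
  have hgap : ∀ i : Fin (n+1), ∀ m : Fin (n+1),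
      (N i : ℕ) < (m : ℕ) → (m : ℕ) ≤ (i : ℕ) → ¬ P m := by
    intro i
    induction i using Fin.induction with
    | zero => intro m hm1 hm2; rw [hN0] at hm1; simp at hm2; omega
    | succ i ih =>
      intro m hm1 hm2
      rw [hNs] at hm1
      by_cases hp : P i.succ
      · rw [if_pos hp] at hm1
        simp only [Fin.val_succ] at hm1 hm2
        omega
      · rw [if_neg hp] at hm1
        simp only [Fin.val_succ] at hm2
        by_cases h' : (m : ℕ) = (i : ℕ) + 1
        · have hm : m = i.succ := Fin.ext (by simp [Fin.val_succ, h'])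
          rw [hm]; exact hp
        · refine ih m hm1 ?_
          simp only [Fin.coe_castSucc]
          omega
  -- collapsing of breakpoints over empty pieces
  have hxeq : ∀ (jj : Fin n) (i0 : Fin (n+1)),
      (∀ m : Fin (n+1), (i0 : ℕ) < (m : ℕ) → (m : ℕ) ≤ (jj : ℕ) → ¬ P m) →
      ∀ j : Fin n, (i0 : ℕ) ≤ (j : ℕ) → (j : ℕ) ≤ (jj : ℕ) → x j = x jj := by
    intro jj i0 hemp
    suffices H : ∀ m : ℕ, ∀ j : Fin n, (jj : ℕ) = (j : ℕ) + m → (i0 : ℕ) ≤ (j : ℕ) → x j = x jj by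
      intro j h1 h2
      exact H ((jj : ℕ) - (j : ℕ)) j (by omega) h1
    intro m
    induction m with
    | zero =>
      intro j hj _
      congr 1
      exact Fin.ext (by omega)
    | succ m ih =>
      intro j hj h1
      have hjn : (j : ℕ) + 1 < n := by have := jj.2; omega
      set j' : Fin n := ⟨(j : ℕ) + 1, by omega⟩ with hj'
      have hxj : x j = x j' := by
        rcases eq_or_lt_of_le (hx (show j ≤ j' from by simp [Fin.le_def, hj'])) with he | hlt
        · exact he
        · exfalso
          refine hemp ⟨(j : ℕ) + 1, by omega⟩ (by simpa using by omega) (by simpa using by omega) ?_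
          refine ⟨x j, fun j2 hj2 => hx (show j2 ≤ j from by simp at hj2 ⊢; omega), fun j2 hj2 => ?_⟩
          refine lt_of_lt_of_le hlt (hx (show j' ≤ j2 from ?_))
          simp only [Fin.le_def, hj'] at hj2 ⊢
          omega
      have hj'v : (j' : ℕ) = (j : ℕ) + 1 := rfl
      rw [hxj]
      exact ih j' (by omega) (by omega)
  -- matching at breakpoints
  have hmatch : ∀ jj : Fin n,
      a (N jj.castSucc) * x jj + c (N jj.castSucc)
        = a (N jj.succ) * x jj + c (N jj.succ) := by
    intro jj
    by_cases hp : P jj.succ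
    · have hn1 : N jj.succ = jj.succ := hNeq _ hp
      obtain ⟨t1, ht1, ht2⟩ := hp
      have hxin : (∀ j : Fin n, (j : ℕ) < ((jj.succ : Fin (n+1)) : ℕ) → x j ≤ x jj) ∧
          (∀ j : Fin n, ((jj.succ : Fin (n+1)) : ℕ) ≤ (j : ℕ) → x jj < x j) := by
        constructor
        · intro j hj
          refine hx ?_
          rw [Fin.le_def]
          rw [Fin.val_succ] at hj
          omega
        · intro j hj
          exact lt_of_le_of_lt (ht1 jj (by simp [Fin.val_succ])) (ht2 j hj)
      have hr : f (x jj) = a jj.succ * (x jj) + c jj.succ := h _ _ hxin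
      set i0 := N jj.castSucc with hi0
      obtain ⟨t0, g1, g2⟩ := hNP jj.castSucc
      have hi0le : (i0 : ℕ) ≤ (jj : ℕ) := by
        have := hNle jj.castSucc
        simpa using this
      have ht0lt : t0 < x jj := g2 jj hi0le
      have hpc : ∀ t : ℝ, t0 ≤ t → t < x jj →
          (∀ j : Fin n, (j : ℕ) < (i0 : ℕ) → x j ≤ t) ∧
            (∀ j : Fin n, (i0 : ℕ) ≤ (j : ℕ) → t < x j) := by
        intro t htt0 htlt
        refine ⟨fun j hj => le_trans (g1 j hj) htt0, fun j hj => ?_⟩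
        by_cases hjj : (jj : ℕ) ≤ (j : ℕ)
        · exact lt_of_lt_of_le htlt (hx (show jj ≤ j from hjj))
        · have hxe : x j = x jj := by
            refine hxeq jj i0 (fun m hm1 hm2 => hgap jj.castSucc m (by simpa using hm1)
              (by simpa using hm2)) j hj (by omega)
          rw [hxe]; exact htlt
      have hlim : f (x jj) = a i0 * x jj + c i0 := by
        have hmem : Set.Ioo t0 (x jj) ∈ nhdsWithin (x jj) (Set.Iio (x jj)) :=
          Ioo_mem_nhdsLT_of_mem ⟨ht0lt, le_refl _⟩
        have hev : ∀ᶠ t in nhdsWithin (x jj) (Set.Iio (x jj)), f t = a i0 * t + c i0 := by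
          filter_upwards [hmem] with t ht
          exact h t i0 (hpc t ht.1.le ht.2)
        have htend2 : Filter.Tendsto (fun t => a i0 * t + c i0)
            (nhdsWithin (x jj) (Set.Iio (x jj))) (nhds (a i0 * x jj + c i0)) :=
          (((continuous_const.mul continuous_id).add continuous_const).tendsto (x jj)).mono_left
            nhdsWithin_le_nhds
        have hev' : f =ᶠ[nhdsWithin (x jj) (Set.Iio (x jj))] (fun t => a i0 * t + c i0) := hev
        have htend1 : Filter.Tendsto f (nhdsWithin (x jj) (Set.Iio (x jj)))
            (nhds (a i0 * x jj + c i0)) := Filter.Tendsto.congr' hev'.symm htend2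
        have htend0 : Filter.Tendsto f (nhdsWithin (x jj) (Set.Iio (x jj))) (nhds (f (x jj))) :=
          (hc.continuousAt.continuousWithinAt).tendsto
        exact tendsto_nhds_unique htend0 htend1
      rw [hn1, ← hr]
      exact hlim.symm
    · have he : N jj.succ = N jj.castSucc := by rw [hNs]; simp [hp]
      rw [he]
  -- telescoping
  have htel : ∀ (i : Fin (n+1)) (t : ℝ),
      a (N 0) * t + c (N 0) + ∑ j ∈ Finset.univ.filter (fun j : Fin n => (j : ℕ) < (i : ℕ)),
        (a (N j.succ) - a (N j.castSucc)) * (t - x j) = a (N i) * t + c (N i) := by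
    intro i
    induction i using Fin.induction with
    | zero =>
      intro t
      have he : Finset.univ.filter (fun j : Fin n => (j : ℕ) < ((0 : Fin (n+1)) : ℕ)) = ∅ := by
        ext j; simp
      rw [he, Finset.sum_empty, add_zero]
    | succ i ih =>
      intro t
      have hins : Finset.univ.filter (fun j : Fin n => (j : ℕ) < ((i.succ : Fin (n+1)) : ℕ))
          = insert i (Finset.univ.filter
              (fun j : Fin n => (j : ℕ) < ((i.castSucc : Fin (n+1)) : ℕ))) := by
        ext j
        simp only [Finset.mem_filter, Finset.mem_univ, true_and, Finset.mem_insert,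
          Fin.val_succ, Fin.coe_castSucc, Fin.ext_iff]
        omega
      rw [hins, Finset.sum_insert (by simp)]
      linear_combination (ih t) + (hmatch i)
  refine ⟨(c (N 0), a (N 0), fun j => a (N j.succ) - a (N j.castSucc), x), hx, ?_⟩
  intro t
  obtain ⟨i, hi⟩ := piece_cover hx t
  have hNi : N i = i := hNeq i ⟨t, hi⟩
  have hft : f t = a (N i) * t + c (N i) := by rw [hNi]; exact h t i hi
  show f t = c (N 0) + a (N 0) * t
      + ∑ j, (a (N j.succ) - a (N j.castSucc)) * max 0 (t - x j)
  rw [sum_max_piece _ hi.1 hi.2, hft, ← htel i t]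
  ring

lemma measurable_image (n : ℕ) :
    MeasurableSet ((fun p => fun q : ℚ => Phi n p (q : ℝ)) ''
      {p : ℝ × ℝ × (Fin n → ℝ) × (Fin n → ℝ) | Monotone p.2.2.2}) := by
  have hcl : IsClosed {p : ℝ × ℝ × (Fin n → ℝ) × (Fin n → ℝ) | Monotone p.2.2.2} := by
    have he : {p : ℝ × ℝ × (Fin n → ℝ) × (Fin n → ℝ) | Monotone p.2.2.2}
        = ⋂ (ij : Fin n × Fin n) (_ : ij.1 ≤ ij.2),
            {p : ℝ × ℝ × (Fin n → ℝ) × (Fin n → ℝ) | p.2.2.2 ij.1 ≤ p.2.2.2 ij.2} := by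
      ext p
      simp only [Set.mem_setOf_eq, Set.mem_iInter]
      exact ⟨fun hm ij hij => hm hij, fun hm i j hij => hm (i, j) hij⟩
    rw [he]
    refine isClosed_iInter fun ij => isClosed_iInter fun _ => ?_
    exact isClosed_le (by fun_prop) (by fun_prop)
  have hsig : IsSigmaCompact {p : ℝ × ℝ × (Fin n → ℝ) × (Fin n → ℝ) | Monotone p.2.2.2} :=
    isSigmaCompact_univ.of_isClosed_subset hcl (Set.subset_univ _)
  have hcont : Continuous (fun p : ℝ × ℝ × (Fin n → ℝ) × (Fin n → ℝ) =>
      fun q : ℚ => Phi n p (q : ℝ)) := by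
    refine continuous_pi fun q => ?_
    unfold Phi
    fun_prop
  obtain ⟨K, hK, hU⟩ := hsig.image hcont
  rw [← hU]
  exact MeasurableSet.iUnion fun m => ((hK m).isClosed).measurableSet


/-- The set of functions `ℚ → ℝ` that extend to a continuous function `ℝ → ℝ` with at
most `k` linear pieces is measurable in the product σ-algebra on `ℝ^ℚ`. -/
theorem tildeE_measurableSet (k : ℕ) :
    MeasurableSet {ft : ℚ → ℝ | ∃ f : ℝ → ℝ,
      (∀ q : ℚ, ft q = f q) ∧ ∃ n < k, ContPiecewiseLinear n f} := by
  have he : {ft : ℚ → ℝ | ∃ f : ℝ → ℝ,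
      (∀ q : ℚ, ft q = f q) ∧ ∃ n < k, ContPiecewiseLinear n f}
      = ⋃ (n : ℕ) (_ : n < k), ((fun p => fun q : ℚ => Phi n p (q : ℝ)) ''
          {p : ℝ × ℝ × (Fin n → ℝ) × (Fin n → ℝ) | Monotone p.2.2.2}) := by
    ext ft
    simp only [Set.mem_setOf_eq, Set.mem_iUnion, Set.mem_image]
    constructor
    · rintro ⟨f, hfq, n, hn, hcpl⟩
      obtain ⟨p, hp, hpf⟩ := cpl_phi hcpl
      exact ⟨n, hn, p, hp, funext fun q => ((hfq q).trans (hpf q)).symm⟩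
    · rintro ⟨n, hn, p, hp, rfl⟩
      exact ⟨Phi n p, fun q => rfl, n, hn, phi_cpl n p hp⟩
  rw [he]
  exact MeasurableSet.iUnion fun n => MeasurableSet.iUnion fun _ => measurable_image n
end

section
/- Let Q be the law (on ℝ^ℚ with the product σ-algebra) of the random function q ↦ b + Σ_{i=1}^{k} w_i^{(2)} max(0, w_i^{(1)} q + b_i^{(1)}) where the parameters have a joint density with respect to Lebesgue measure on ℝ^{3k+1}, and let P be defined analogously with j ≠ k neurons and parameters having a Lebesgue density. Then Q and P are mutually singular. -/
open MeasureTheory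

def chordDefect (g : ℚ → ℝ) (a r b' : ℚ) : ℝ :=
  (g r - g a) * ((b' : ℝ) - (a : ℝ)) - (g b' - g a) * ((r : ℝ) - (a : ℝ))

def NonAff (g : ℚ → ℝ) (a b' : ℚ) : Prop :=
  ∃ r : ℚ, a < r ∧ r < b' ∧ chordDefect g a r b' ≠ 0

def Am (m : ℕ) : Set (ℚ → ℝ) :=
  {g | ∃ q : Fin (m + 1) → ℚ, StrictMono q ∧
    ∀ l : ℕ, (h : l + 1 ≤ m) → NonAff g (q ⟨l, by omega⟩) (q ⟨l + 1, by omega⟩)}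

lemma measurable_chordDefect (a r b' : ℚ) :
    Measurable fun g : ℚ → ℝ => chordDefect g a r b' := by
  unfold chordDefect
  fun_prop

lemma measurableSet_Am (m : ℕ) : MeasurableSet (Am m) := by
  have : Am m = ⋃ (q : Fin (m + 1) → ℚ) (_ : StrictMono q),
      ⋂ (l : ℕ) (h : l + 1 ≤ m),
        ⋃ (r : ℚ) (_ : q ⟨l, by omega⟩ < r ∧ r < q ⟨l + 1, by omega⟩),
          {g : ℚ → ℝ | chordDefect g (q ⟨l, by omega⟩) r (q ⟨l + 1, by omega⟩) ≠ 0} := by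
    ext g
    simp only [Am, NonAff, Set.mem_setOf_eq, Set.mem_iUnion, Set.mem_iInter]
    constructor
    · rintro ⟨q, hq, hcond⟩
      exact ⟨q, hq, fun l h => by obtain ⟨r, h1, h2, h3⟩ := hcond l h; exact ⟨r, ⟨h1, h2⟩, h3⟩⟩
    · rintro ⟨q, hq, hcond⟩
      exact ⟨q, hq, fun l h => by obtain ⟨r, ⟨h1, h2⟩, h3⟩ := hcond l h; exact ⟨r, h1, h2, h3⟩⟩
  rw [this]
  refine MeasurableSet.iUnion fun q => MeasurableSet.iUnion fun _ =>
    MeasurableSet.iInter fun l => MeasurableSet.iInter fun h =>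
    MeasurableSet.iUnion fun r => MeasurableSet.iUnion fun _ => ?_
  exact (measurable_chordDefect _ _ _ (measurableSet_singleton 0)).compl

lemma Am_anti {m m' : ℕ} (h : m ≤ m') : Am m' ⊆ Am m := by
  rintro g ⟨q, hq, hcond⟩
  refine ⟨fun i => q ⟨i, by omega⟩, fun i j hij => hq (Fin.mk_lt_mk.mpr hij), ?_⟩
  intro l hl
  exact hcond l (by omega)

/-- An affine function with no root in an open interval is single-signed on the closed one. -/
lemma affine_single_sign (w c A B : ℝ) (hroot : ∀ x, A < x → x < B → w * x + c ≠ 0) :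
    (∀ x ∈ Set.Icc A B, 0 ≤ w * x + c) ∨ (∀ x ∈ Set.Icc A B, w * x + c ≤ 0) := by
  by_contra hcon
  push_neg at hcon
  obtain ⟨⟨x1, hx1, h1⟩, ⟨x2, hx2, h2⟩⟩ := hcon
  -- w * x1 + c < 0 < w * x2 + c
  set f : ℝ → ℝ := fun x => w * x + c with hf
  have hc : ∀ u v : ℝ, ContinuousOn f (Set.Icc u v) :=
    fun u v => (Continuous.add (continuous_const.mul continuous_id) continuous_const).continuousOn
  rcases lt_trichotomy x1 x2 with hlt | heq | hgt
  · have : (0:ℝ) ∈ f '' Set.Ioo x1 x2 :=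
      intermediate_value_Ioo hlt.le (hc x1 x2) ⟨h1, h2⟩
    obtain ⟨ξ, hξ, hfξ⟩ := this
    exact hroot ξ (lt_of_le_of_lt hx1.1 hξ.1) (lt_of_lt_of_le hξ.2 hx2.2) hfξ
  · rw [heq] at h1; linarith
  · have : (0:ℝ) ∈ f '' Set.Ioo x2 x1 :=
      intermediate_value_Ioo' hgt.le (hc x2 x1) ⟨h1, h2⟩
    obtain ⟨ξ, hξ, hfξ⟩ := this
    exact hroot ξ (lt_of_le_of_lt hx2.1 hξ.1) (lt_of_lt_of_le hξ.2 hx1.2) hfξ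

/-- Per-term chord defect. -/
noncomputable def termDefect (w c A R B : ℝ) : ℝ :=
  (max 0 (w * R + c) - max 0 (w * A + c)) * (B - A)
    - (max 0 (w * B + c) - max 0 (w * A + c)) * (R - A)

lemma termDefect_eq_zero_of_single_sign (w c A R B : ℝ) (hAR : A ≤ R) (hRB : R ≤ B)
    (hs : (∀ x ∈ Set.Icc A B, 0 ≤ w * x + c) ∨ (∀ x ∈ Set.Icc A B, w * x + c ≤ 0)) :
    termDefect w c A R B = 0 := by
  have hA : A ∈ Set.Icc A B := ⟨le_refl _, hAR.trans hRB⟩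
  have hR : R ∈ Set.Icc A B := ⟨hAR, hRB⟩
  have hB : B ∈ Set.Icc A B := ⟨hAR.trans hRB, le_refl _⟩
  rcases hs with hs | hs
  · unfold termDefect
    rw [max_eq_right (hs A hA), max_eq_right (hs R hR), max_eq_right (hs B hB)]
    ring
  · unfold termDefect
    rw [max_eq_left (hs A hA), max_eq_left (hs R hR), max_eq_left (hs B hB)]
    ring

lemma chordDefect_reluNet {k : ℕ} (w1 w2 b1 : Fin k → ℝ) (b : ℝ) (a r b' : ℚ) :
    chordDefect (fun q : ℚ => reluNet w1 w2 b1 b (q : ℝ)) a r b'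
      = ∑ i, w2 i * termDefect (w1 i) (b1 i) (a : ℝ) (r : ℝ) (b' : ℝ) := by
  have hsub : ∀ y x : ℚ,
      (b + ∑ i, w2 i * max 0 (w1 i * (y : ℝ) + b1 i))
        - (b + ∑ i, w2 i * max 0 (w1 i * (x : ℝ) + b1 i))
      = ∑ i, (w2 i * max 0 (w1 i * (y : ℝ) + b1 i) - w2 i * max 0 (w1 i * (x : ℝ) + b1 i)) := by
    intro y x
    rw [Finset.sum_sub_distrib]
    ring
  simp only [chordDefect, reluNet]
  rw [hsub, hsub, Finset.sum_mul, Finset.sum_mul, ← Finset.sum_sub_distrib]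
  refine Finset.sum_congr rfl fun i _ => ?_
  unfold termDefect
  ring

lemma exists_kink {k : ℕ} {w1 w2 b1 : Fin k → ℝ} {b : ℝ} {a b' : ℚ}
    (h : NonAff (fun q : ℚ => reluNet w1 w2 b1 b (q : ℝ)) a b') :
    ∃ i, w1 i ≠ 0 ∧ ∃ x : ℝ, (a : ℝ) < x ∧ x < (b' : ℝ) ∧ w1 i * x + b1 i = 0 := by
  obtain ⟨r, har, hrb, hd⟩ := h
  by_contra hcon
  push_neg at hcon
  apply hd
  rw [chordDefect_reluNet]
  apply Finset.sum_eq_zero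
  intro i _
  have hAR : (a : ℝ) ≤ (r : ℝ) := by exact_mod_cast har.le
  have hRB : (r : ℝ) ≤ (b' : ℝ) := by exact_mod_cast hrb.le
  rw [termDefect_eq_zero_of_single_sign _ _ _ _ _ hAR hRB, mul_zero]
  rcases eq_or_ne (w1 i) 0 with hw | hw
  · rcases le_total 0 (b1 i) with hb1 | hb1
    · exact Or.inl fun x _ => by rw [hw]; simpa using hb1
    · exact Or.inr fun x _ => by rw [hw]; simpa using hb1
  · exact affine_single_sign _ _ _ _ fun x hx1 hx2 hx3 => (hcon i hw x hx1 hx2) hx3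

lemma notMem_Am_succ {k : ℕ} (w1 w2 b1 : Fin k → ℝ) (b : ℝ) :
    (fun q : ℚ => reluNet w1 w2 b1 b (q : ℝ)) ∉ Am (k + 1) := by
  rintro ⟨q, hq, hcond⟩
  have H : ∀ l : Fin (k + 1), ∃ i, w1 i ≠ 0 ∧ ∃ x : ℝ,
      ((q ⟨l.1, by omega⟩ : ℚ) : ℝ) < x ∧ x < ((q ⟨l.1 + 1, by omega⟩ : ℚ) : ℝ) ∧
        w1 i * x + b1 i = 0 :=
    fun l => exists_kink (hcond l.1 (by omega))
  choose I hI x hx1 hx2 hx3 using H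
  have hxx : ∀ l l' : Fin (k + 1), l.1 < l'.1 → x l < x l' := by
    intro l l' hll
    have hqle : ((q ⟨l.1 + 1, by omega⟩ : ℚ) : ℝ) ≤ ((q ⟨l'.1, by omega⟩ : ℚ) : ℝ) :=
      Rat.cast_le.mpr (hq.monotone (Fin.mk_le_mk.mpr (by omega)))
    exact (hx2 l).trans (hqle.trans_lt (hx1 l'))
  have hInj : Function.Injective I := by
    intro l l' hII
    rcases lt_trichotomy l.1 l'.1 with hlt | heq | hgt
    · exfalso
      have h1 := hx3 l
      have h2 := hx3 l'
      rw [← hII] at h2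
      have : x l = x l' := by
        have := mul_left_cancel₀ (hI l) (show w1 (I l) * x l = w1 (I l) * x l' by linarith)
        exact this
      exact absurd this (hxx l l' hlt).ne
    · exact Fin.ext heq
    · exfalso
      have h1 := hx3 l
      have h2 := hx3 l'
      rw [← hII] at h2
      have : x l = x l' := by
        have := mul_left_cancel₀ (hI l) (show w1 (I l) * x l = w1 (I l) * x l' by linarith)
        exact this
      exact absurd this.symm (hxx l' l hgt).ne
  have := Fintype.card_le_of_injective I hInj
  simp only [Fintype.card_fin] at this
  omega

/-- The nonzero term defect across a genuine kink. -/
lemma termDefect_ne_zero {w c A R B t : ℝ} (hw : w ≠ 0) (ht : w * t + c = 0)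
    (hAR : A < R) (hRt : R < t) (htB : t < B) :
    termDefect w c A R B ≠ 0 := by
  have hc : c = -(w * t) := by linarith
  subst hc
  have hAt : A < t := hAR.trans hRt
  rcases lt_or_gt_of_ne hw with hneg | hpos
  · -- w < 0 : positive to the left of t, negative to the right
    have m1 : max 0 (w * A + -(w * t)) = w * A + -(w * t) :=
      max_eq_right (by nlinarith)
    have m2 : max 0 (w * R + -(w * t)) = w * R + -(w * t) :=
      max_eq_right (by nlinarith)
    have m3 : max 0 (w * B + -(w * t)) = 0 := max_eq_left (by nlinarith)
    unfold termDefect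
    rw [m1, m2, m3]
    have he : (w * R + -(w * t) - (w * A + -(w * t))) * (B - A)
        - (0 - (w * A + -(w * t))) * (R - A) = w * (B - t) * (R - A) := by ring
    rw [he]
    exact mul_ne_zero (mul_ne_zero hw (by linarith)) (by linarith)
  · -- w > 0 : negative to the left of t, positive to the right
    have m1 : max 0 (w * A + -(w * t)) = 0 := max_eq_left (by nlinarith)
    have m2 : max 0 (w * R + -(w * t)) = 0 := max_eq_left (by nlinarith)
    have m3 : max 0 (w * B + -(w * t)) = w * B + -(w * t) :=
      max_eq_right (by nlinarith)
    unfold termDefect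
    rw [m1, m2, m3]
    have he : (0 - 0) * (B - A) - (w * B + -(w * t) - 0) * (R - A)
        = -(w * (B - t) * (R - A)) := by ring
    rw [he]
    exact neg_ne_zero.mpr (mul_ne_zero (mul_ne_zero hw (by linarith)) (by linarith))

lemma mem_Am {k : ℕ} (w1 w2 b1 : Fin k → ℝ) (b : ℝ)
    (h1 : ∀ i, w1 i ≠ 0) (h2 : ∀ i, w2 i ≠ 0)
    (h3 : ∀ i i', i ≠ i' → b1 i * w1 i' ≠ b1 i' * w1 i) :
    (fun q : ℚ => reluNet w1 w2 b1 b (q : ℝ)) ∈ Am k := by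
  rcases Nat.eq_zero_or_pos k with hk | hk
  · subst hk
    exact ⟨fun _ => 0, fun i j hij => absurd (Fin.lt_def.mp hij) (by omega),
      fun l hl => absurd hl (by omega)⟩
  -- the kink locations
  set t : Fin k → ℝ := fun i => -b1 i / w1 i with htdef
  have htroot : ∀ i, w1 i * t i + b1 i = 0 := by
    intro i
    show w1 i * (-b1 i / w1 i) + b1 i = 0
    rw [mul_comm, div_mul_cancel₀ _ (h1 i)]
    ring
  have htinj : Function.Injective t := by
    intro i i' he
    by_contra hne
    apply h3 i i' hne
    have := (div_eq_div_iff (h1 i) (h1 i')).mp he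
    linarith
  have huniq : ∀ i x, w1 i * x + b1 i = 0 → x = t i := by
    intro i x hx
    have := htroot i
    have := mul_left_cancel₀ (h1 i) (show w1 i * x = w1 i * t i by linarith)
    exact this
  set s : Finset ℝ := Finset.univ.image t with hsdef
  have hcard : s.card = k := by
    rw [hsdef, Finset.card_image_of_injective _ htinj, Finset.card_univ, Fintype.card_fin]
  set u : Fin k ≃o {x // x ∈ s} := s.orderIsoOfFin hcard with hudef
  set U : ℕ → ℝ := fun n => ((u ⟨min n (k - 1), by omega⟩ : {x // x ∈ s}) : ℝ) with hUdef
  have hU : ∀ m : Fin k, U m.1 = ((u m : {x // x ∈ s}) : ℝ) := by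
    intro m
    simp only [hUdef]
    congr 2
    exact Fin.ext (by simp; omega)
  have hUmono : ∀ {n m : ℕ}, n ≤ m → U n ≤ U m := by
    intro n m h
    exact Subtype.coe_le_coe.mpr (u.le_iff_le.mpr (Fin.mk_le_mk.mpr (by omega)))
  have hUstrict : ∀ {n m : ℕ}, n < m → m ≤ k - 1 → U n < U m := by
    intro n m h h'
    exact Subtype.coe_lt_coe.mpr (u.lt_iff_lt.mpr (Fin.mk_lt_mk.mpr (by omega)))
  -- lower and upper interleaving bounds
  set Lo : ℕ → ℝ := fun l => if l = 0 then U 0 - 1 else U (l - 1) with hLodef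
  set Hi : ℕ → ℝ := fun l => if l = k then U (k - 1) + 1 else U l with hHidef
  have hLoHi : ∀ l, l ≤ k → Lo l < Hi l := by
    intro l hl
    simp only [hLodef, hHidef]
    rcases Nat.eq_zero_or_pos l with h0 | h0
    · subst h0
      rw [if_pos rfl, if_neg (by omega)]
      linarith
    · rw [if_neg (by omega)]
      rcases eq_or_ne l k with hkl | hkl
      · rw [if_pos hkl, hkl]
        have := hUmono (show k - 1 - 1 ≤ k - 1 by omega) -- unneeded
        nlinarith [hUmono (show l - 1 ≤ k - 1 by omega)]
      · rw [if_neg hkl]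
        exact hUstrict (by omega) (by omega)
  have hrat : ∀ l : Fin (k + 1), ∃ r : ℚ, Lo l.1 < (r : ℝ) ∧ (r : ℝ) < Hi l.1 :=
    fun l => exists_rat_btwn (hLoHi l.1 (by omega))
  choose q hq1 hq2 using hrat
  have hHiLo : ∀ n m : ℕ, n < m → m ≤ k → Hi n ≤ Lo m := by
    intro n m h h'
    simp only [hLodef, hHidef]
    rw [if_neg (by omega), if_neg (by omega)]
    exact hUmono (by omega)
  have hqmono : StrictMono q := by
    intro i j hij
    have h1' : (q i : ℝ) < Hi i.1 := hq2 i
    have h2' : Lo j.1 < (q j : ℝ) := hq1 j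
    have h3' := hHiLo i.1 j.1 (Fin.lt_def.mp hij) (by omega)
    have : (q i : ℝ) < (q j : ℝ) := (h1'.trans_le h3').trans h2'
    exact_mod_cast this
  refine ⟨q, hqmono, ?_⟩
  intro l hl
  set A : ℝ := ((q ⟨l, by omega⟩ : ℚ) : ℝ) with hAdef
  set B : ℝ := ((q ⟨l + 1, by omega⟩ : ℚ) : ℝ) with hBdef
  have hlk : l ≤ k - 1 := by omega
  have hAU : A < U l := by
    have := hq2 ⟨l, by omega⟩
    simp only [hHidef, if_neg (show l ≠ k by omega)] at this
    exact this
  have hUB : U l < B := by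
    have := hq1 ⟨l + 1, by omega⟩
    simp only [hLodef, if_neg (show l + 1 ≠ 0 by omega)] at this
    simpa using this
  -- the neuron whose kink is U l
  have hmem : (↑(u ⟨l, by omega⟩) : ℝ) ∈ Finset.univ.image t := (u ⟨l, by omega⟩).2
  obtain ⟨i0, _, hi0⟩ := Finset.mem_image.mp hmem
  have hti0 : t i0 = U l := by rw [hi0, hU ⟨l, by omega⟩]
  -- other kinks avoid (A, B)
  have hother : ∀ i, i ≠ i0 → t i ≤ Lo l ∨ Hi (l + 1) ≤ t i := by
    intro i hi
    have hmem' : t i ∈ s := Finset.mem_image_of_mem t (Finset.mem_univ i)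
    set m : Fin k := u.symm ⟨t i, hmem'⟩ with hmdef
    have hum : ((u m : {x // x ∈ s}) : ℝ) = t i := by rw [hmdef, u.apply_symm_apply]
    have htim : t i = U m.1 := by rw [hU m, hum]
    rcases lt_trichotomy m.1 l with hc | hc | hc
    · left
      rw [htim]
      simp only [hLodef, if_neg (show l ≠ 0 by omega)]
      exact hUmono (by omega)
    · exfalso
      apply hi
      apply htinj
      rw [htim, hc, ← hti0]
    · right
      rw [htim]
      simp only [hHidef, if_neg (show l + 1 ≠ k by omega)]
      exact hUmono (by omega)
  -- pick the middle rational strictly between A and the kink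
  obtain ⟨r, hr1, hr2⟩ := exists_rat_btwn (show A < t i0 by rw [hti0]; exact hAU)
  refine ⟨r, ?_, ?_, ?_⟩
  · have h := hr1; rw [hAdef] at h; exact_mod_cast h
  · have h : (r : ℝ) < B := hr2.trans (by rw [hti0]; exact hUB)
    rw [hBdef] at h; exact_mod_cast h
  · rw [chordDefect_reluNet]
    rw [Finset.sum_eq_single i0]
    · apply mul_ne_zero (h2 i0)
      exact termDefect_ne_zero (h1 i0) (htroot i0) hr1 hr2 (by rw [hti0]; exact hUB)
    · intro i _ hi
      rw [termDefect_eq_zero_of_single_sign _ _ _ _ _ hr1.le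
        (hr2.trans (by rw [hti0]; exact hUB)).le, mul_zero]
      apply affine_single_sign
      intro x hx1 hx2 hx3
      have hxt : x = t i := huniq i x hx3
      rcases hother i hi with hc | hc
      · have hLA : Lo l < A := hq1 ⟨l, by omega⟩
        rw [hxt] at hx1
        linarith
      · have hBH : B < Hi (l + 1) := hq2 ⟨l + 1, by omega⟩
        rw [hxt] at hx2
        linarith
    · intro h
      exact absurd (Finset.mem_univ i0) h

abbrev Param (k : ℕ) := (Fin k → ℝ) × (Fin k → ℝ) × (Fin k → ℝ) × ℝ

lemma measurable_netMap (k : ℕ) :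
    Measurable fun p : Param k => fun q : ℚ => reluNet p.1 p.2.1 p.2.2.1 p.2.2.2 (q : ℝ) := by
  apply measurable_pi_lambda
  intro q
  unfold reluNet
  fun_prop

def Good (k : ℕ) : Set (Param k) :=
  {p | (∀ i, p.1 i ≠ 0) ∧ (∀ i, p.2.1 i ≠ 0) ∧
    ∀ i i', i ≠ i' → p.2.2.1 i * p.1 i' ≠ p.2.2.1 i' * p.1 i}

lemma volume_w1_zero (k : ℕ) (i : Fin k) : volume {p : Param k | p.1 i = 0} = 0 := by
  have h : {p : Param k | p.1 i = 0}
      = {x : Fin k → ℝ | x i = 0} ×ˢ (Set.univ : Set ((Fin k → ℝ) × (Fin k → ℝ) × ℝ)) := by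
    ext p; simp [Set.mem_prod]
  rw [h, Measure.volume_eq_prod, Measure.prod_prod, volume_pi, Measure.pi_hyperplane, zero_mul]

lemma volume_w2_zero (k : ℕ) (i : Fin k) : volume {p : Param k | p.2.1 i = 0} = 0 := by
  have h : {p : Param k | p.2.1 i = 0}
      = (Set.univ : Set (Fin k → ℝ)) ×ˢ
        ({x : Fin k → ℝ | x i = 0} ×ˢ (Set.univ : Set ((Fin k → ℝ) × ℝ))) := by
    ext p; simp [Set.mem_prod]
  rw [h, Measure.volume_eq_prod, Measure.prod_prod, Measure.volume_eq_prod, Measure.prod_prod,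
    volume_pi, Measure.pi_hyperplane, zero_mul, mul_zero]

lemma volume_cross (k : ℕ) (i i' : Fin k) (hii : i ≠ i') :
    volume {p : Param k | p.1 i ≠ 0 ∧ p.2.2.1 i * p.1 i' = p.2.2.1 i' * p.1 i} = 0 := by
  rw [Measure.volume_eq_prod]
  have hmeas : MeasurableSet
      {p : (Fin k → ℝ) × ((Fin k → ℝ) × (Fin k → ℝ) × ℝ) |
        p.1 i ≠ 0 ∧ p.2.2.1 i * p.1 i' = p.2.2.1 i' * p.1 i} := by
    apply MeasurableSet.inter
    · exact (measurableSet_eq_fun (by fun_prop) measurable_const).compl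
    · exact measurableSet_eq_fun (by fun_prop) (by fun_prop)
  rw [Measure.measure_prod_null hmeas]
  apply Filter.Eventually.of_forall
  intro w1
  rcases eq_or_ne (w1 i) 0 with hw | hw
  · have : (Prod.mk w1 ⁻¹'
        {p : (Fin k → ℝ) × ((Fin k → ℝ) × (Fin k → ℝ) × ℝ) |
          p.1 i ≠ 0 ∧ p.2.2.1 i * p.1 i' = p.2.2.1 i' * p.1 i}) = ∅ := by
      ext r; simp [hw]
    simp [this]
  · -- the slice is univ ×ˢ (ker ℓ ×ˢ univ)
    set ℓ : (Fin k → ℝ) →ₗ[ℝ] ℝ :=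
      (w1 i') • (LinearMap.proj i) - (w1 i) • (LinearMap.proj i') with hldef
    have hker : LinearMap.ker ℓ ≠ ⊤ := by
      intro htop
      have hmem : Pi.single i' (1:ℝ) ∈ LinearMap.ker ℓ := htop ▸ Submodule.mem_top
      rw [LinearMap.mem_ker, hldef] at hmem
      simp only [LinearMap.sub_apply, LinearMap.smul_apply, LinearMap.proj_apply,
        smul_eq_mul] at hmem
      simp [Pi.single_apply, hii.symm, sub_eq_zero] at hmem
      exact hw hmem
    have hslice : (Prod.mk w1 ⁻¹'
        {p : (Fin k → ℝ) × ((Fin k → ℝ) × (Fin k → ℝ) × ℝ) |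
          p.1 i ≠ 0 ∧ p.2.2.1 i * p.1 i' = p.2.2.1 i' * p.1 i})
        = (Set.univ : Set (Fin k → ℝ)) ×ˢ
          ((LinearMap.ker ℓ : Set (Fin k → ℝ)) ×ˢ (Set.univ : Set ℝ)) := by
      ext r
      simp only [Set.mem_preimage, Set.mem_setOf_eq, Set.mem_prod, Set.mem_univ, true_and,
        and_true, SetLike.mem_coe, LinearMap.mem_ker, hldef, LinearMap.sub_apply,
        LinearMap.smul_apply, LinearMap.proj_apply, smul_eq_mul]
      constructor
      · rintro ⟨-, h⟩; linarith
      · intro h; exact ⟨hw, by linarith⟩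
    have goal' : volume (Prod.mk w1 ⁻¹'
        {p : (Fin k → ℝ) × ((Fin k → ℝ) × (Fin k → ℝ) × ℝ) |
          p.1 i ≠ 0 ∧ p.2.2.1 i * p.1 i' = p.2.2.1 i' * p.1 i}) = 0 := by
      rw [hslice, Measure.volume_eq_prod, Measure.prod_prod, Measure.volume_eq_prod,
        Measure.prod_prod, Measure.addHaar_submodule _ _ hker, zero_mul, mul_zero]
    simpa using goal'

lemma volume_Good_compl (k : ℕ) : volume (Good k)ᶜ = 0 := by
  have hsub : (Good k)ᶜ ⊆ (⋃ i, {p : Param k | p.1 i = 0}) ∪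
      (⋃ i, {p : Param k | p.2.1 i = 0}) ∪
      (⋃ c : Fin k × Fin k, if c.1 ≠ c.2 then
        {p : Param k | p.1 c.1 ≠ 0 ∧ p.2.2.1 c.1 * p.1 c.2 = p.2.2.1 c.2 * p.1 c.1} else ∅) := by
    intro p hp
    simp only [Good, Set.mem_compl_iff, Set.mem_setOf_eq, not_and_or, not_forall] at hp
    rcases hp with ⟨i, hi⟩ | hp
    · left; left; exact Set.mem_iUnion.mpr ⟨i, not_not.mp hi⟩
    rcases hp with ⟨i, hi⟩ | hp
    · left; right; exact Set.mem_iUnion.mpr ⟨i, not_not.mp hi⟩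
    · obtain ⟨i, i', hii, heq⟩ := hp
      rcases eq_or_ne (p.1 i) 0 with hz | hz
      · left; left; exact Set.mem_iUnion.mpr ⟨i, hz⟩
      · right
        refine Set.mem_iUnion.mpr ⟨(i, i'), ?_⟩
        rw [if_pos hii]
        exact ⟨hz, not_not.mp heq⟩
  apply measure_mono_null hsub
  refine measure_union_null (measure_union_null ?_ ?_) ?_
  · exact measure_iUnion_null fun i => volume_w1_zero k i
  · exact measure_iUnion_null fun i => volume_w2_zero k i
  · refine measure_iUnion_null fun c => ?_
    rcases eq_or_ne c.1 c.2 with h | h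
    · rw [if_neg (by simpa using h)]; simp
    · rw [if_pos h]; exact volume_cross k c.1 c.2 h

lemma aux_singular {k j : ℕ} (hjk : j < k)
    (μ : Measure (Param k)) [IsProbabilityMeasure μ] (hμ : μ ≪ volume)
    (ν : Measure (Param j)) [IsProbabilityMeasure ν] (hν : ν ≪ volume) :
    (μ.map (fun p => fun q : ℚ => reluNet p.1 p.2.1 p.2.2.1 p.2.2.2 (q : ℝ))).MutuallySingular
      (ν.map (fun p => fun q : ℚ => reluNet p.1 p.2.1 p.2.2.1 p.2.2.2 (q : ℝ))) := by
  refine ⟨(Am (j + 1))ᶜ, (measurableSet_Am (j + 1)).compl, ?_, ?_⟩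
  · rw [Measure.map_apply (measurable_netMap k) (measurableSet_Am (j + 1)).compl]
    apply measure_mono_null _ (hμ (volume_Good_compl k))
    intro p hp
    simp only [Set.mem_preimage, Set.mem_compl_iff] at hp ⊢
    intro hg
    exact hp (Am_anti (by omega) (mem_Am p.1 p.2.1 p.2.2.1 p.2.2.2 hg.1 hg.2.1 hg.2.2))
  · rw [compl_compl, Measure.map_apply (measurable_netMap j) (measurableSet_Am (j + 1))]
    have : (fun p : Param j => fun q : ℚ => reluNet p.1 p.2.1 p.2.2.1 p.2.2.2 (q : ℝ)) ⁻¹'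
        Am (j + 1) = ∅ := by
      ext p
      simp only [Set.mem_preimage, Set.mem_empty_iff_false, iff_false]
      exact notMem_Am_succ p.1 p.2.1 p.2.2.1 p.2.2.2
    rw [this, measure_empty]

/-- The laws on `ℝ^ℚ` of one-hidden-layer ReLU networks with `k` and `j ≠ k` neurons,
whose parameters have densities with respect to Lebesgue measure, are mutually
singular. -/
theorem reluNet_laws_mutuallySingular (k j : ℕ) (hjk : j ≠ k)
    (μ : Measure ((Fin k → ℝ) × (Fin k → ℝ) × (Fin k → ℝ) × ℝ))
    [IsProbabilityMeasure μ] (hμ : μ ≪ volume)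
    (ν : Measure ((Fin j → ℝ) × (Fin j → ℝ) × (Fin j → ℝ) × ℝ))
    [IsProbabilityMeasure ν] (hν : ν ≪ volume) :
    (μ.map (fun p => fun q : ℚ => reluNet p.1 p.2.1 p.2.2.1 p.2.2.2 (q : ℝ))).MutuallySingular
      (ν.map (fun p => fun q : ℚ => reluNet p.1 p.2.1 p.2.2.1 p.2.2.2 (q : ℝ))) := by
  rcases hjk.lt_or_gt with h | h
  · exact aux_singular h μ hμ ν hν
  · exact (aux_singular h ν hν μ hμ).symm
end

section
/- In Bayesian linear regression with Gaussian prior W ∼ N(0, I_k) on ℝ^k, Gaussian variational family Q = N(μ_Q, Σ_Q), data design matrix φ_X ∈ ℝ^{n×k}, noise variance σ², and a fixed finite index set A with full-row-rank feature matrix φ_A ∈ ℝ^{m×k}, any stationary point μ_Q of the objective E_{W∼Q}[log p(y|W)] − D_KL(Q_A, P_A) satisfies (φ_Xᵀφ_X + σ² φ_Aᵀ(φ_A φ_Aᵀ)⁻¹φ_A) μ_Q = φ_Xᵀ y; equivalently μ_Q = (φ_Xᵀφ_X + σ² Π_A)† φ_Xᵀ y where Π_A = φ_Aᵀ(φ_A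 φ_Aᵀ)⁻¹φ_A is the orthogonal projection onto the row space of φ_A. -/
open Matrix

/-- The variational objective of Bayesian linear regression with standard normal prior,
Gaussian variational family `Q = N(μ, SQ)`, design matrix `φX`, noise variance `σ²`,
and KL term evaluated on the marginals at a fixed index set with feature matrix `φA`
(viewed as a function of the variational mean `μ` with `SQ` held fixed):
`E_{W∼Q}[log p(y|W)] − D_KL(Q_A, P_A)` in closed form. -/
noncomputable def blrObjective {n m k : ℕ} (φX : Matrix (Fin n) (Fin k) ℝ)
    (φA : Matrix (Fin m) (Fin k) ℝ) (SQ : Matrix (Fin k) (Fin k) ℝ)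
    (y : Fin n → ℝ) (σ : ℝ) (μ : Fin k → ℝ) : ℝ :=
  (-(n : ℝ) / 2 * Real.log (2 * Real.pi * σ ^ 2) -
      (1 / (2 * σ ^ 2)) *
        ((y - φX.mulVec μ) ⬝ᵥ (y - φX.mulVec μ) + (φXᵀ * φX * SQ).trace)) -
    (1 / 2) *
      (-(m : ℝ) + μ ⬝ᵥ (φAᵀ * (φA * φAᵀ)⁻¹ * φA).mulVec μ +
        ((φA * φAᵀ)⁻¹ * (φA * SQ * φAᵀ)).trace -
        Real.log (((φA * φAᵀ)⁻¹ * (φA * SQ * φAᵀ)).det))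

/-! Along each line `μ + t • v` the objective is a quadratic polynomial in `t` whose linear
coefficient is `g μ ⬝ᵥ v`, where `g μ = σ⁻² φXᵀ (y - φX μ) - Π_A μ` (the KL quadratic form
contributes `½ (Π_A + Π_Aᵀ) μ`, and `Π_A` is symmetric). Hence the derivative at `μ` is
`g μ ⬝ᵥ ·`, it vanishes exactly when `g μ = 0`, and multiplying by `σ²` gives the normal
equation. -/

section DotProduct

variable {ι R : Type*} [Fintype ι] [CommRing R]

lemma dotProduct_sub_smul_self (r p : ι → R) (t : R) :
    (r - t • p) ⬝ᵥ (r - t • p) = r ⬝ᵥ r - 2 * t * (r ⬝ᵥ p) + t ^ 2 * (p ⬝ᵥ p) := by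
  simp only [sub_dotProduct, dotProduct_sub, smul_dotProduct, dotProduct_smul, smul_eq_mul,
    dotProduct_comm p r]
  ring

lemma add_smul_dotProduct_mulVec_add_smul (M : Matrix ι ι R) (x v : ι → R) (t : R) :
    (x + t • v) ⬝ᵥ M *ᵥ (x + t • v) =
      x ⬝ᵥ M *ᵥ x + t * (((M + Mᵀ) *ᵥ x) ⬝ᵥ v) + t ^ 2 * (v ⬝ᵥ M *ᵥ v) := by
  have hx : x ⬝ᵥ M *ᵥ v = (Mᵀ *ᵥ x) ⬝ᵥ v := by rw [dotProduct_mulVec, mulVec_transpose]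
  simp only [mulVec_add, mulVec_smul, add_dotProduct, dotProduct_add, smul_dotProduct,
    dotProduct_smul, smul_eq_mul, add_mulVec, hx, dotProduct_comm v (M *ᵥ x)]
  ring

end DotProduct

lemma hasLineDerivAt_of_eq_quadratic {𝕜 E F : Type*} [NontriviallyNormedField 𝕜]
    [AddCommGroup E] [Module 𝕜 E] [NormedAddCommGroup F] [NormedSpace 𝕜 F]
    {f : E → F} {x v : E} {b a : F} (hf : ∀ t : 𝕜, f (x + t • v) = f x + t • b + t ^ 2 • a) :
    HasLineDerivAt 𝕜 f b x v := by
  have h : HasDerivAt (fun t : 𝕜 ↦ f x + t • b + t ^ 2 • a) b 0 := by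
    convert (((hasDerivAt_id (0 : 𝕜)).smul_const b).const_add (f x)).add
      ((hasDerivAt_pow 2 (0 : 𝕜)).smul_const a) using 1
    · rfl
    · simp
  unfold HasLineDerivAt
  simpa only [hf] using h

lemma isSymm_transpose_mul_inv_mul {ι κ R : Type*} [Fintype ι] [Fintype κ] [DecidableEq ι]
    [CommRing R] (A : Matrix ι κ R) : (Aᵀ * (A * Aᵀ)⁻¹ * A).IsSymm := by
  simp only [IsSymm, transpose_mul, transpose_transpose, transpose_nonsing_inv, Matrix.mul_assoc]

section BayesianLinearRegression

variable {n m k : ℕ} (φX : Matrix (Fin n) (Fin k) ℝ) (φA : Matrix (Fin m) (Fin k) ℝ)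
  (SQ : Matrix (Fin k) (Fin k) ℝ) (y : Fin n → ℝ) (σ : ℝ)

noncomputable def blrGradient (μ : Fin k → ℝ) : Fin k → ℝ :=
  (σ ^ 2)⁻¹ • φXᵀ *ᵥ (y - φX *ᵥ μ) - (φAᵀ * (φA * φAᵀ)⁻¹ * φA) *ᵥ μ

lemma blrObjective_add_smul (μ v : Fin k → ℝ) (t : ℝ) :
    blrObjective φX φA SQ y σ (μ + t • v) =
      blrObjective φX φA SQ y σ μ + t * (blrGradient φX φA y σ μ ⬝ᵥ v) +
        t ^ 2 * (-(1 / (2 * σ ^ 2)) * (φX *ᵥ v ⬝ᵥ φX *ᵥ v) -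
          (1 / 2) * (v ⬝ᵥ (φAᵀ * (φA * φAᵀ)⁻¹ * φA) *ᵥ v)) := by
  have hres : y - φX *ᵥ (μ + t • v) = (y - φX *ᵥ μ) - t • φX *ᵥ v := by
    rw [mulVec_add, mulVec_smul]; abel
  have hP := (isSymm_transpose_mul_inv_mul φA).eq
  have hX : (y - φX *ᵥ μ) ⬝ᵥ φX *ᵥ v = (φXᵀ *ᵥ (y - φX *ᵥ μ)) ⬝ᵥ v := by
    rw [dotProduct_mulVec, mulVec_transpose]
  rw [blrObjective, blrObjective, hres, dotProduct_sub_smul_self,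
    add_smul_dotProduct_mulVec_add_smul, hP, hX]
  simp only [blrGradient, add_mulVec, add_dotProduct, sub_dotProduct, smul_dotProduct, smul_eq_mul]
  ring

lemma differentiable_blrObjective : Differentiable ℝ (blrObjective φX φA SQ y σ) := by
  unfold blrObjective
  simp only [dotProduct, mulVec, Pi.sub_apply]
  fun_prop

lemma fderiv_blrObjective_apply (μ v : Fin k → ℝ) :
    fderiv ℝ (blrObjective φX φA SQ y σ) μ v = blrGradient φX φA y σ μ ⬝ᵥ v :=
  ((differentiable_blrObjective φX φA SQ y σ μ).hasFDerivAt.hasLineDerivAt v).unique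
    (hasLineDerivAt_of_eq_quadratic (blrObjective_add_smul φX φA SQ y σ μ v))

lemma blrGradient_eq (hσ : σ ≠ 0) (μ : Fin k → ℝ) :
    blrGradient φX φA y σ μ =
      (σ ^ 2)⁻¹ • (φXᵀ *ᵥ y - (φXᵀ * φX + σ ^ 2 • (φAᵀ * (φA * φAᵀ)⁻¹ * φA)) *ᵥ μ) := by
  rw [blrGradient, smul_sub, mulVec_sub, add_mulVec, smul_add, smul_mulVec, smul_smul,
    inv_mul_cancel₀ (pow_ne_zero 2 hσ), one_smul, mulVec_mulVec, smul_sub]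
  abel

end BayesianLinearRegression

theorem blr_stationary_point_general {n m k : ℕ} (φX : Matrix (Fin n) (Fin k) ℝ)
    (φA : Matrix (Fin m) (Fin k) ℝ) (SQ : Matrix (Fin k) (Fin k) ℝ)
    (y : Fin n → ℝ) (σ : ℝ) (hσ : 0 < σ) (μQ : Fin k → ℝ)
    (hstat : fderiv ℝ (blrObjective φX φA SQ y σ) μQ = 0) :
    (φXᵀ * φX + σ ^ 2 • (φAᵀ * (φA * φAᵀ)⁻¹ * φA)).mulVec μQ = φXᵀ.mulVec y := by
  have hgrad : blrGradient φX φA y σ μQ = 0 := dotProduct_eq_zero _ fun v ↦ by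
    rw [← fderiv_blrObjective_apply φX φA SQ, hstat, _root_.zero_apply]
  rw [blrGradient_eq φX φA y σ hσ.ne', smul_eq_zero_iff_right (by positivity), sub_eq_zero] at hgrad
  exact hgrad.symm

/-- Any stationary point `μQ` of the Bayesian linear regression variational objective
(with full-row-rank index-set feature matrix `φA`) satisfies
`(φXᵀφX + σ² φAᵀ(φA φAᵀ)⁻¹ φA) μQ = φXᵀ y`. -/
theorem blr_stationary_point {n m k : ℕ} (φX : Matrix (Fin n) (Fin k) ℝ)
    (φA : Matrix (Fin m) (Fin k) ℝ) (SQ : Matrix (Fin k) (Fin k) ℝ)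
    (y : Fin n → ℝ) (σ : ℝ) (hσ : 0 < σ)
    (hA : IsUnit (φA * φAᵀ)) (hSQ : SQ.PosDef) (μQ : Fin k → ℝ)
    (hstat : fderiv ℝ (blrObjective φX φA SQ y σ) μQ = 0) :
    (φXᵀ * φX + σ ^ 2 • (φAᵀ * (φA * φAᵀ)⁻¹ * φA)).mulVec μQ = φXᵀ.mulVec y :=
  blr_stationary_point_general φX φA SQ y σ hσ μQ hstat
end
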